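/- If X and Y are disjoint sets with X equinumerous to Y, then there exists a total order on X ∪ Y such that X is strictly dense in Y: for any two elements a < b of Y there exists c ∈ X with a < c < b. -/

import Mathlib

theorem dense_order_of_equinumerous {α : Type*} (X Y : Set α) (hXY : Disjoint X Y)
    (h : Nonempty (X ≃ Y)) :
    ∃ s : ↥(X ∪ Y) → ↥(X ∪ Y) → Prop, IsLinearOrder ↥(X ∪ Y) s ∧
      ∀ a b : ↥(X ∪ Y), (a : α) ∈ Y → (b : α) ∈ Y → (s a b ∧ ¬ s b a) →
        ∃ c : ↥(X ∪ Y), (c : α) ∈ X ∧ (s a c ∧ ¬ s c a) ∧ (s c b ∧ ¬ s b c) := by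
  classical
  obtain ⟨e⟩ := h
  letI : LinearOrder ↥Y := IsWellOrder.linearOrder WellOrderingRel
  -- map each element to (its Y-label, side), X elements labeled by e
  set g : ↥(X ∪ Y) → Lex (↥Y × Bool) := fun u =>
    if hu : (u : α) ∈ Y then toLex (⟨u, hu⟩, false)
    else toLex (e ⟨u, u.2.resolve_right hu⟩, true) with hg
  have hginj : Function.Injective g := by
    intro u v huv
    simp only [hg] at huv
    split_ifs at huv with h1 h2 h2
    · have := congrArg (fun p => (ofLex p).1) huv
      simpa [Subtype.ext_iff] using this
    · have := congrArg (fun p => (ofLex p).2) huv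
      simp at this
    · have := congrArg (fun p => (ofLex p).2) huv
      simp at this
    · have := congrArg (fun p => (ofLex p).1) huv
      have := e.injective this
      simpa [Subtype.ext_iff] using this
  letI : LinearOrder ↥(X ∪ Y) := LinearOrder.lift' g hginj
  refine ⟨fun u v => g u ≤ g v, ?_, ?_⟩
  · exact (inferInstance : IsLinearOrder ↥(X ∪ Y) (· ≤ ·))
  intro a b ha hb hab
  have hlt : g a < g b := lt_of_le_not_ge hab.1 hab.2
  have hga : g a = toLex (⟨a, ha⟩, false) := by simp [hg, ha]
  have hgb : g b = toLex (⟨b, hb⟩, false) := by simp [hg, hb]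
  set c0 : ↥X := e.symm ⟨a, ha⟩ with hc0
  refine ⟨⟨c0, Or.inl c0.2⟩, c0.2, ?_⟩
  have hcY : (c0 : α) ∉ Y := fun hY => hXY.le_bot ⟨c0.2, hY⟩ |>.elim
  have hgc : g ⟨c0, Or.inl c0.2⟩ = toLex (⟨a, ha⟩, true) := by
    simp only [hg, dif_neg hcY]
    congr 1
    have : (⟨(c0 : α), (Or.inl c0.2 : (c0:α) ∈ X ∪ Y).resolve_right hcY⟩ : ↥X) = c0 :=
      Subtype.ext rfl
    rw [this, hc0, e.apply_symm_apply]
  have h1 : g a < g ⟨c0, Or.inl c0.2⟩ := by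
    rw [hga, hgc]
    exact Prod.Lex.right _ (by simp)
  have h2 : g ⟨c0, Or.inl c0.2⟩ < g b := by
    rw [hgc, hgb]
    rw [hga, hgb] at hlt
    rcases Prod.Lex.lt_iff.1 hlt with h' | ⟨h', h''⟩
    · exact Prod.Lex.left _ _ h'
    · simp at h''
  exact ⟨⟨le_of_lt h1, not_le_of_gt h1⟩, le_of_lt h2, not_le_of_gt h2⟩
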